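/- Let 0 < σ̲ ≤ σ̄ and u(t,x) = ∫_{−∞}^x ρ(t,y) dy with ρ(t,y) = (√2/((σ̄+σ̲)√(πt)))·[exp(−y²/(2σ̄²t)) for y ≤ 0, exp(−y²/(2σ̲²t)) for y > 0]. Then for every x ≠ 0, u(t,x) → 1_{[0,∞)}(x) as t → 0⁺; that is, lim_{t→0⁺} u(t,x) = 0 for x < 0 and lim_{t→0⁺} u(t,x) = 1 for x > 0. -/

import Mathlib

open Real MeasureTheory Filter Set

lemma aux_exp_Ioi {k : ℝ} (hk : 0 < k) (a : ℝ) :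
    IntegrableOn (fun y : ℝ => Real.exp (-(k * y))) (Ioi a) ∧
      ∫ y in Ioi a, Real.exp (-(k * y)) = Real.exp (-(k * a)) / k := by
  have hint : IntegrableOn (fun y : ℝ => Real.exp (-(k * y))) (Ioi a) := by
    simpa [neg_mul] using exp_neg_integrableOn_Ioi a hk
  refine ⟨hint, ?_⟩
  have hderiv : ∀ y ∈ Ici a, HasDerivAt (fun y => -(Real.exp (-(k * y)) / k))
      (Real.exp (-(k * y))) y := by
    intro y _
    have h1 : HasDerivAt (fun y : ℝ => -(k * y)) (-k) y := by
      exact ((hasDerivAt_id y).const_mul k).neg.congr_deriv (by ring)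
    have h2 : HasDerivAt (fun y : ℝ => Real.exp (-(k * y))) (Real.exp (-(k * y)) * (-k)) y :=
      (Real.hasDerivAt_exp _).comp y h1
    have h3 := (h2.div_const k).neg
    refine h3.congr_deriv ?_
    rw [mul_neg, neg_div, neg_neg, mul_div_cancel_right₀ _ hk.ne']
  have h0 : Tendsto (fun y : ℝ => -(k * y)) atTop atBot :=
    tendsto_neg_atTop_atBot.comp (tendsto_id.const_mul_atTop hk)
  have htend : Tendsto (fun y : ℝ => -(Real.exp (-(k * y)) / k)) atTop (nhds 0) := by
    simpa using ((Real.tendsto_exp_atBot.comp h0).div_const k).neg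
  rw [integral_Ioi_of_hasDerivAt_of_tendsto' hderiv hint htend]
  ring

lemma aux_exp_Iic {k : ℝ} (hk : 0 < k) (a : ℝ) :
    IntegrableOn (fun y : ℝ => Real.exp (k * y)) (Iic a) ∧
      ∫ y in Iic a, Real.exp (k * y) = Real.exp (k * a) / k := by
  obtain ⟨hint, hval⟩ := aux_exp_Ioi hk (-a)
  constructor
  · have h2 : Integrable ((Ioi (-a)).indicator fun y : ℝ => Real.exp (-(k * y))) :=
      (integrable_indicator_iff measurableSet_Ioi).2 hint
    have h3 := h2.comp_neg
    have h4 : (fun x : ℝ => (Ioi (-a)).indicator (fun y : ℝ => Real.exp (-(k * y))) (-x))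
        = (Iio a).indicator fun y : ℝ => Real.exp (k * y) := by
      funext y
      by_cases h : y < a <;>
        simp [indicator_apply, h, neg_lt_neg_iff, mul_neg, neg_neg, not_lt.2, le_of_not_gt]
    rw [h4] at h3
    have h5 : IntegrableOn (fun y : ℝ => Real.exp (k * y)) (Iio a) :=
      (integrable_indicator_iff measurableSet_Iio).1 h3
    exact h5.congr_set_ae Iio_ae_eq_Iic.symm
  · have h := integral_comp_neg_Iic a (fun z : ℝ => Real.exp (-(k * z)))
    simp only [mul_neg, neg_neg] at h
    rw [h, hval, mul_neg, neg_neg]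

lemma aux_gauss_int {σ t : ℝ} (hσ : 0 < σ) (ht : 0 < t) :
    Integrable (fun y : ℝ => Real.exp (-y ^ 2 / (2 * σ ^ 2 * t))) := by
  have hb : (0:ℝ) < (2 * σ ^ 2 * t)⁻¹ := by positivity
  refine (integrable_exp_neg_mul_sq hb).congr (Eventually.of_forall fun y => ?_)
  simp only [neg_mul, ← div_eq_inv_mul, ← neg_div]

lemma aux_gauss_Ioi {σ t : ℝ} (hσ : 0 < σ) (ht : 0 < t) :
    ∫ y in Ioi (0:ℝ), Real.exp (-y ^ 2 / (2 * σ ^ 2 * t))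
      = σ * Real.sqrt (2 * Real.pi * t) / 2 := by
  have heq : (fun y : ℝ => Real.exp (-y ^ 2 / (2 * σ ^ 2 * t)))
      = fun y : ℝ => Real.exp (-(2 * σ ^ 2 * t)⁻¹ * y ^ 2) :=
    funext fun y => by rw [neg_mul, ← div_eq_inv_mul, ← neg_div]
  rw [heq, integral_gaussian_Ioi]
  have h1 : Real.pi / (2 * σ ^ 2 * t)⁻¹ = σ ^ 2 * (2 * Real.pi * t) := by
    field_simp
  rw [h1, Real.sqrt_mul (sq_nonneg σ), Real.sqrt_sq hσ.le]

lemma aux_gauss_Iic {σ t : ℝ} (hσ : 0 < σ) (ht : 0 < t) :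
    ∫ y in Iic (0:ℝ), Real.exp (-y ^ 2 / (2 * σ ^ 2 * t))
      = σ * Real.sqrt (2 * Real.pi * t) / 2 := by
  have h := integral_comp_neg_Iic (0:ℝ) (fun y : ℝ => Real.exp (-y ^ 2 / (2 * σ ^ 2 * t)))
  simp only [neg_sq, neg_zero] at h
  rw [h, aux_gauss_Ioi hσ ht]

theorem stmt_8 (σl σu : ℝ) (hl : 0 < σl) (hle : σl ≤ σu)
    (ρ : ℝ → ℝ → ℝ)
    (hρ : ∀ t y, ρ t y = (Real.sqrt 2 / ((σu + σl) * Real.sqrt (Real.pi * t))) *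
      (if y ≤ 0 then Real.exp (-y ^ 2 / (2 * σu ^ 2 * t))
       else Real.exp (-y ^ 2 / (2 * σl ^ 2 * t))))
    (u : ℝ → ℝ → ℝ)
    (hu : ∀ t x, u t x = ∫ y in Set.Iic x, ρ t y) :
    ∀ x : ℝ, x ≠ 0 →
      Tendsto (fun t => u t x) (nhdsWithin 0 (Set.Ioi 0))
        (nhds (if x < 0 then (0:ℝ) else 1)) := by
  intro x hx
  have hσu : 0 < σu := lt_of_lt_of_le hl hle
  have hsum : 0 < σu + σl := by linarith
  have hπ : (0:ℝ) < Real.pi := Real.pi_pos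
  set C : ℝ → ℝ := fun t => Real.sqrt 2 / ((σu + σl) * Real.sqrt (Real.pi * t)) with hC
  have hCpos : ∀ t : ℝ, 0 < t → 0 < C t := by
    intro t ht
    have hs : 0 < Real.sqrt (Real.pi * t) := Real.sqrt_pos.2 (by positivity)
    exact div_pos (Real.sqrt_pos.2 (by norm_num)) (mul_pos hsum hs)
  have hρnn : ∀ t y : ℝ, 0 < t → 0 ≤ ρ t y := by
    intro t y ht
    rw [hρ]
    refine mul_nonneg (hCpos t ht).le ?_
    split_ifs <;> positivity
  have hIic0 : ∀ t : ℝ, 0 < t → IntegrableOn (ρ t) (Iic 0) := by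
    intro t ht
    refine (((aux_gauss_int hσu ht).const_mul (C t)).integrableOn).congr_fun
      (fun y hy => ?_) measurableSet_Iic
    simp only [hρ, hC]
    rw [if_pos (mem_Iic.mp hy)]
  have hIoi0 : ∀ t : ℝ, 0 < t → IntegrableOn (ρ t) (Ioi 0) := by
    intro t ht
    refine (((aux_gauss_int hl ht).const_mul (C t)).integrableOn).congr_fun
      (fun y hy => ?_) measurableSet_Ioi
    simp only [hρ, hC]
    rw [if_neg (not_le.2 (mem_Ioi.mp hy))]
  have hInt : ∀ t : ℝ, 0 < t → Integrable (ρ t) := by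
    intro t ht
    rw [← integrableOn_univ, ← Iic_union_Ioi (a := (0:ℝ))]
    exact (hIic0 t ht).union (hIoi0 t ht)
  have hTot : ∀ t : ℝ, 0 < t → ∫ y, ρ t y = 1 := by
    intro t ht
    rw [← intervalIntegral.integral_Iic_add_Ioi (hIic0 t ht) (hIoi0 t ht)]
    have e1 : ∫ y in Iic (0:ℝ), ρ t y = C t * (σu * Real.sqrt (2 * Real.pi * t) / 2) := by
      have heq : EqOn (ρ t) (fun y => C t * Real.exp (-y ^ 2 / (2 * σu ^ 2 * t))) (Iic 0) := by
        intro y hy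
        simp only [hρ, hC]
        rw [if_pos (mem_Iic.mp hy)]
      rw [setIntegral_congr_fun measurableSet_Iic heq, integral_const_mul, aux_gauss_Iic hσu ht]
    have e2 : ∫ y in Ioi (0:ℝ), ρ t y = C t * (σl * Real.sqrt (2 * Real.pi * t) / 2) := by
      have heq : EqOn (ρ t) (fun y => C t * Real.exp (-y ^ 2 / (2 * σl ^ 2 * t))) (Ioi 0) := by
        intro y hy
        simp only [hρ, hC]
        rw [if_neg (not_le.2 (mem_Ioi.mp hy))]
      rw [setIntegral_congr_fun measurableSet_Ioi heq, integral_const_mul, aux_gauss_Ioi hl ht]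
    rw [e1, e2, hC]
    have hs : (0:ℝ) < Real.sqrt (Real.pi * t) := Real.sqrt_pos.2 (by positivity)
    have h2 : Real.sqrt (2 * Real.pi * t) = Real.sqrt 2 * Real.sqrt (Real.pi * t) := by
      rw [mul_assoc, Real.sqrt_mul (by norm_num : (0:ℝ) ≤ 2)]
    have hss : Real.sqrt 2 * Real.sqrt 2 = 2 := Real.mul_self_sqrt (by norm_num)
    rw [h2]
    field_simp
    linear_combination hss
  -- square root tendsto
  have hsqrt0 : Tendsto (fun t : ℝ => Real.sqrt t) (nhdsWithin 0 (Ioi 0)) (nhds 0) := by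
    have := (Real.continuous_sqrt.tendsto' 0 0 (by simp))
    exact this.mono_left nhdsWithin_le_nhds
  by_cases hneg : x < 0
  · rw [if_pos hneg]
    set K : ℝ := Real.sqrt 2 * (2 * σu ^ 2) / ((σu + σl) * Real.sqrt Real.pi * (-x)) with hK
    apply squeeze_zero' (g := fun t => K * Real.sqrt t)
    · filter_upwards [self_mem_nhdsWithin] with t ht
      rw [hu]
      exact setIntegral_nonneg measurableSet_Iic fun y _ => hρnn t y ht
    · filter_upwards [self_mem_nhdsWithin] with t ht
      have ht : (0:ℝ) < t := ht
      have hxn : (0:ℝ) < -x := neg_pos.2 hneg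
      have hc : (0:ℝ) < 2 * σu ^ 2 * t := by positivity
      set k : ℝ := (-x) / (2 * σu ^ 2 * t) with hk
      have hkpos : 0 < k := div_pos hxn hc
      obtain ⟨hbint, hbval⟩ := aux_exp_Iic hkpos x
      have hCt := hCpos t ht
      calc u t x ≤ ∫ y in Iic x, C t * Real.exp (k * y) := by
            rw [hu]
            refine setIntegral_mono_on ((hInt t ht).integrableOn)
              (hbint.const_mul (C t)) measurableSet_Iic ?_
            intro y hy
            have hy' : y ≤ x := mem_Iic.mp hy
            have hy0 : y ≤ 0 := hy'.trans hneg.le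
            rw [hρ, if_pos hy0]
            refine mul_le_mul_of_nonneg_left ?_ hCt.le
            refine Real.exp_le_exp.2 ?_
            have h2 : k * y = (-x * y) / (2 * σu ^ 2 * t) := by rw [hk]; ring
            rw [h2]
            apply div_le_div_of_nonneg_right ?_ hc.le
            nlinarith
        _ = C t * (Real.exp (k * x) / k) := by rw [integral_const_mul, hbval]
        _ ≤ C t * (1 / k) := by
            refine mul_le_mul_of_nonneg_left ?_ hCt.le
            refine div_le_div_of_nonneg_right ?_ hkpos.le
            exact Real.exp_le_one_iff.2 (by nlinarith)
        _ = K * Real.sqrt t := by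
            rw [hK, hk, hC]
            have h1 : Real.sqrt (Real.pi * t) = Real.sqrt Real.pi * Real.sqrt t :=
              Real.sqrt_mul hπ.le t
            have h2 : Real.sqrt t * Real.sqrt t = t := Real.mul_self_sqrt ht.le
            have hst : (0:ℝ) < Real.sqrt t := Real.sqrt_pos.2 ht
            have hsp : (0:ℝ) < Real.sqrt Real.pi := Real.sqrt_pos.2 hπ
            simp only [h1]
            field_simp
            linear_combination h2
    · simpa using hsqrt0.const_mul K
  · rw [if_neg hneg]
    have hpos : 0 < x := lt_of_le_of_ne (not_lt.1 hneg) (Ne.symm hx)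
    have key : Tendsto (fun t => 1 - u t x) (nhdsWithin 0 (Ioi 0)) (nhds 0) := by
      have hrepr : ∀ t : ℝ, 0 < t → 1 - u t x = ∫ y in Ioi x, ρ t y := by
        intro t ht
        have hadd := intervalIntegral.integral_Iic_add_Ioi (b := x) ((hInt t ht).integrableOn)
          ((hInt t ht).integrableOn)
        rw [hu, ← hTot t ht]
        linarith
      set K : ℝ := Real.sqrt 2 * (2 * σl ^ 2) / ((σu + σl) * Real.sqrt Real.pi * x) with hK
      apply squeeze_zero' (g := fun t => K * Real.sqrt t)
      · filter_upwards [self_mem_nhdsWithin] with t ht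
        rw [hrepr t ht]
        exact setIntegral_nonneg measurableSet_Ioi fun y _ => hρnn t y ht
      · filter_upwards [self_mem_nhdsWithin] with t ht
        have ht : (0:ℝ) < t := ht
        have hc : (0:ℝ) < 2 * σl ^ 2 * t := by positivity
        set k : ℝ := x / (2 * σl ^ 2 * t) with hk
        have hkpos : 0 < k := div_pos hpos hc
        obtain ⟨hbint, hbval⟩ := aux_exp_Ioi hkpos x
        have hCt := hCpos t ht
        rw [hrepr t ht]
        calc (∫ y in Ioi x, ρ t y) ≤ ∫ y in Ioi x, C t * Real.exp (-(k * y)) := by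
              refine setIntegral_mono_on ((hInt t ht).integrableOn)
                (hbint.const_mul (C t)) measurableSet_Ioi ?_
              intro y hy
              have hy' : x < y := mem_Ioi.mp hy
              have hy0 : ¬ y ≤ 0 := not_le.2 (hpos.trans hy')
              rw [hρ, if_neg hy0]
              refine mul_le_mul_of_nonneg_left ?_ hCt.le
              refine Real.exp_le_exp.2 ?_
              have h2 : -(k * y) = (-(x * y)) / (2 * σl ^ 2 * t) := by rw [hk]; ring
              rw [h2]
              apply div_le_div_of_nonneg_right ?_ hc.le
              nlinarith
          _ = C t * (Real.exp (-(k * x)) / k) := by rw [integral_const_mul, hbval]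
          _ ≤ C t * (1 / k) := by
              refine mul_le_mul_of_nonneg_left ?_ hCt.le
              refine div_le_div_of_nonneg_right ?_ hkpos.le
              exact Real.exp_le_one_iff.2 (by nlinarith)
          _ = K * Real.sqrt t := by
              rw [hK, hk, hC]
              have h1 : Real.sqrt (Real.pi * t) = Real.sqrt Real.pi * Real.sqrt t :=
                Real.sqrt_mul hπ.le t
              have h2 : Real.sqrt t * Real.sqrt t = t := Real.mul_self_sqrt ht.le
              have hst : (0:ℝ) < Real.sqrt t := Real.sqrt_pos.2 ht
              have hsp : (0:ℝ) < Real.sqrt Real.pi := Real.sqrt_pos.2 hπ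
              simp only [h1]
              field_simp
              linear_combination (-1:ℝ) * h2
      · simpa using hsqrt0.const_mul K
    have h := (tendsto_const_nhds (x := (1:ℝ)) (f := nhdsWithin 0 (Ioi 0))).sub key
    simpa using h
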